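/- For every positive integer k, the thickened 4k-star has edge-crossing width at least k. -/

import Mathlib

open SimpleGraph

universe u

/-- A tree-cut decomposition of a graph `G`: a finite tree `T` together with
pairwise disjoint (possibly empty) bags covering the vertex set of `G`. -/
structure TreeCutDecomp {V : Type u} (G : SimpleGraph V) where
  β : Type
  fintypeβ : Fintype β
  T : SimpleGraph β
  isTree : T.IsTree
  bag : β → Set V
  disj : Pairwise fun s t => Disjoint (bag s) (bag t)
  covers : ∀ v : V, ∃ t, v ∈ bag t

namespace TreeCutDecomp

variable {V : Type u} {G : SimpleGraph V}

/-- The edge `e` of `G` crosses the bag at node `t`: its endpoints lie in bag-unions of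
two distinct components of `T - t`. -/
def Crosses (D : TreeCutDecomp G) (t : D.β) (e : Sym2 V) : Prop :=
  e ∈ G.edgeSet ∧ ∃ (u v : V) (s₁ s₂ : D.β) (h₁ : s₁ ≠ t) (h₂ : s₂ ≠ t),
    e = s(u, v) ∧ u ∈ D.bag s₁ ∧ v ∈ D.bag s₂ ∧
    ¬ (D.T.induce {x | x ≠ t}).Reachable ⟨s₁, h₁⟩ ⟨s₂, h₂⟩

/-- The number of edges crossing the bag at node `t`. -/
noncomputable def crossNum (D : TreeCutDecomp G) (t : D.β) : ℕ :=
  {e : Sym2 V | D.Crosses t e}.ncard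

/-- The crossing number of the decomposition is at most `k`. -/
def CrossLE (D : TreeCutDecomp G) (k : ℕ) : Prop := ∀ t, D.crossNum t ≤ k

/-- The thickness (maximum bag size) of the decomposition is at most `a`. -/
def ThickLE (D : TreeCutDecomp G) (a : ℕ) : Prop := ∀ t, (D.bag t).ncard ≤ a

end TreeCutDecomp

/-- The `α`-edge-crossing width: minimum crossing number over tree-cut decompositions
of thickness at most `α`. -/
noncomputable def ecrwA {V : Type u} (G : SimpleGraph V) (a : ℕ) : ℕ :=
  sInf {k | ∃ D : TreeCutDecomp G, D.ThickLE a ∧ D.CrossLE k}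

/-- The edge-crossing width: minimum over tree-cut decompositions of the maximum of the
thickness and the crossing number. -/
noncomputable def ecrw {V : Type u} (G : SimpleGraph V) : ℕ :=
  sInf {k | ∃ D : TreeCutDecomp G, D.ThickLE k ∧ D.CrossLE k}

/-- The thickened `n`-star: a star `K_{1,n}` with each edge replaced by `n` internally
vertex-disjoint paths of length two. `Sum.inl ()` is the center `c`, `Sum.inr (Sum.inl i)`
is `u_i`, and `Sum.inr (Sum.inr (i, j))` is the middle vertex `v_{i,j}`. -/
def thickenedStar (n : ℕ) : SimpleGraph (Unit ⊕ (Fin n ⊕ (Fin n × Fin n))) :=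
  SimpleGraph.fromRel fun x y =>
    match x, y with
    | Sum.inl _, Sum.inr (Sum.inr _) => True
    | Sum.inr (Sum.inl i), Sum.inr (Sum.inr (a, _)) => i = a
    | _, _ => False


section Aux

variable {β : Type}

/-- The inclusion homomorphism from an induced subgraph. -/
def indHom (T : SimpleGraph β) (s : Set β) : T.induce s →g T :=
  ⟨Subtype.val, fun {a b} h => h⟩

lemma reach_avoid {T : SimpleGraph β} {t a b : β} (ha : a ≠ t) (hb : b ≠ t)
    (h : (T.induce {x | x ≠ t}).Reachable ⟨a, ha⟩ ⟨b, hb⟩) :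
    ∃ w : T.Walk a b, t ∉ w.support := by
  obtain ⟨w⟩ := h
  refine ⟨w.map (indHom T {x | x ≠ t}), fun hmem => ?_⟩
  erw [SimpleGraph.Walk.support_map, List.mem_map] at hmem
  obtain ⟨x, -, hx⟩ := hmem
  exact x.2 hx

lemma factA {T : SimpleGraph β} (hT : T.IsTree) {a b t : β}
    (w : T.Walk a b) (hw : w.IsPath) (htw : t ∈ w.support) (ha : a ≠ t) (hb : b ≠ t) :
    ¬ (T.induce {x | x ≠ t}).Reachable ⟨a, ha⟩ ⟨b, hb⟩ := by
  classical
  intro h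
  obtain ⟨w', hw'⟩ := reach_avoid ha hb h
  have hq := hT.2.path_unique ⟨w, hw⟩ w'.toPath
  apply hw'
  have hsub := SimpleGraph.Walk.support_toPath_subset w'
  have heq : w = (w'.toPath : T.Walk a b) := congrArg Subtype.val hq
  exact hsub (heq ▸ htw)

lemma factB {T : SimpleGraph β} (hT : T.IsTree) {a b s : β} (hadj : T.Adj a b)
    (hsa : s ≠ a) (hsb : s ≠ b)
    (h1 : (T.induce {x | x ≠ a}).Reachable ⟨b, hadj.ne'⟩ ⟨s, hsa⟩) :
    ¬ (T.induce {x | x ≠ b}).Reachable ⟨a, hadj.ne⟩ ⟨s, hsb⟩ := by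
  intro h2
  obtain ⟨w1, hw1⟩ := reach_avoid hadj.ne' hsa h1
  obtain ⟨w2, hw2⟩ := reach_avoid hadj.ne hsb h2
  have hbr := isAcyclic_iff_forall_edge_isBridge.mp hT.2 (T.mem_edgeSet.mpr hadj)
  rw [isBridge_iff] at hbr
  apply hbr
  refine ⟨(w2.append w1.reverse).transfer _ fun e he => ?_⟩
  have heT : e ∈ T.edgeSet := SimpleGraph.Walk.edges_subset_edgeSet _ he
  rw [SimpleGraph.Walk.edges_append, List.mem_append] at he
  simp only [edgeSet_deleteEdges, Set.mem_diff, Set.mem_singleton_iff]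
  refine ⟨heT, fun hcon => ?_⟩
  obtain rfl := hcon
  rcases he with he | he
  · exact hw2 (SimpleGraph.Walk.snd_mem_support_of_mem_edges _ he)
  · rw [SimpleGraph.Walk.edges_reverse, List.mem_reverse] at he
    exact hw1 (SimpleGraph.Walk.fst_mem_support_of_mem_edges _ he)

end Aux

section Star

variable {n : ℕ}

def ctr (n : ℕ) : Unit ⊕ (Fin n ⊕ (Fin n × Fin n)) := Sum.inl ()
def uu {n : ℕ} (i : Fin n) : Unit ⊕ (Fin n ⊕ (Fin n × Fin n)) := Sum.inr (Sum.inl i)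
def mv {n : ℕ} (i j : Fin n) : Unit ⊕ (Fin n ⊕ (Fin n × Fin n)) := Sum.inr (Sum.inr (i, j))

@[simp] lemma mv_inj {i j i' j' : Fin n} : mv i j = mv i' j' ↔ i = i' ∧ j = j' := by
  simp [mv, Prod.ext_iff]

@[simp] lemma ctr_ne_mv {i j : Fin n} : ctr n ≠ mv i j := by simp [ctr, mv]

@[simp] lemma uu_ne_mv {i i' j : Fin n} : uu i ≠ mv i' j := by simp [uu, mv]

@[simp] lemma ctr_ne_uu {i : Fin n} : ctr n ≠ uu i := by simp [ctr, uu]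

@[simp] lemma uu_inj {i i' : Fin n} : uu i = uu i' ↔ i = i' := by simp [uu]

lemma adj_ctr_mv (i j : Fin n) : (thickenedStar n).Adj (ctr n) (mv i j) := by
  rw [thickenedStar, SimpleGraph.fromRel_adj]
  exact ⟨ctr_ne_mv, Or.inl trivial⟩

lemma adj_uu_mv (i j : Fin n) : (thickenedStar n).Adj (uu i) (mv i j) := by
  rw [thickenedStar, SimpleGraph.fromRel_adj]
  exact ⟨uu_ne_mv, Or.inl rfl⟩

end Star

/-- The trivial one-node decomposition. -/
def trivDecomp {V : Type u} [Fintype V] (G : SimpleGraph V) : TreeCutDecomp G where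
  β := PUnit
  fintypeβ := inferInstance
  T := ⊥
  isTree := by
    constructor
    · constructor
      intro a b
      cases a; cases b; exact SimpleGraph.Reachable.refl _
    · intro v c hc
      cases c with
      | nil => exact hc.ne_nil rfl
      | cons h p => simp at h
  bag := fun _ => Set.univ
  disj := fun s t hst => absurd (Subsingleton.elim s t) hst
  covers := fun v => ⟨PUnit.unit, Set.mem_univ v⟩

lemma trivDecomp_mem {V : Type u} [Fintype V] (G : SimpleGraph V) :
    Nat.card V ∈ {k | ∃ D : TreeCutDecomp G, D.ThickLE k ∧ D.CrossLE k} := by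
  refine ⟨trivDecomp G, fun t => ?_, fun t => ?_⟩
  · show (Set.univ : Set V).ncard ≤ Nat.card V
    rw [Set.ncard_univ]
  · have hempty : {e : Sym2 V | (trivDecomp G).Crosses t e} = ∅ := by
      ext e
      simp only [Set.mem_setOf_eq, Set.mem_empty_iff_false, iff_false]
      rintro ⟨-, u, v, s₁, s₂, h₁, -⟩
      exact h₁ (Subsingleton.elim (α := PUnit) s₁ t)
    rw [TreeCutDecomp.crossNum, hempty, Set.ncard_empty]
    exact Nat.zero_le _


/-- For every positive integer `k`, the thickened `4k`-star has edge-crossing width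
at least `k`. -/
theorem stmt_7 (k : ℕ) (hk : 0 < k) : k ≤ ecrw (thickenedStar (4 * k)) := by
  classical
  set n := 4 * k with hn
  apply le_csInf ⟨_, trivDecomp_mem (thickenedStar n)⟩
  rintro m ⟨D, hthick, hcross⟩
  by_contra hlt
  push_neg at hlt
  -- nodes of vertices
  choose nd hnd using D.covers
  have ndu : ∀ (v : Unit ⊕ (Fin n ⊕ (Fin n × Fin n))) (s : D.β), v ∈ D.bag s → s = nd v := by
    intro v s hv
    by_contra hne
    exact Set.disjoint_left.mp (D.disj hne) hv (hnd v)
  set tc := nd (ctr n) with htc_def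
  -- some u_i outside the bag of the centre
  have hex : ∃ i : Fin n, nd (uu i) ≠ tc := by
    by_contra hall
    push_neg at hall
    have hsub : Set.range (uu : Fin n → _) ⊆ D.bag tc := by
      rintro _ ⟨i, rfl⟩
      exact (hall i) ▸ hnd (uu i)
    have h1 := Set.ncard_le_ncard hsub (Set.toFinite _)
    rw [← Set.image_univ, Set.ncard_image_of_injective _ (fun a b h => by simpa using h),
      Set.ncard_univ, Nat.card_eq_fintype_card, Fintype.card_fin] at h1
    have := hthick tc
    omega
  obtain ⟨i, hne⟩ := hex
  set ti := nd (uu i) with hti_def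
  -- counting helpers
  have hbag : ∀ (t : D.β), ({j | mv i j ∈ D.bag t} : Set (Fin n)).ncard ≤ m := by
    intro t
    refine le_trans (Set.ncard_le_ncard_of_injOn (mv i) (fun j hj => hj)
      (fun a _ b _ h => by simpa using h) (Set.toFinite _)) (hthick t)
  by_cases hadj : D.T.Adj tc ti
  · -- adjacent case
    set Sg : Set (Fin n) :=
      {j | mv i j ∉ D.bag tc ∧ mv i j ∉ D.bag ti ∧ ¬ D.Crosses tc s(uu i, mv i j)} with hSg
    have hcrossbag : ({j | D.Crosses tc s(uu i, mv i j)} : Set (Fin n)).ncard ≤ m := by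
      refine le_trans (Set.ncard_le_ncard_of_injOn (fun j => s(uu i, mv i j))
        (fun j hj => hj) (fun a _ b _ h => ?_) (Set.toFinite _)) (hcross tc)
      simp only [Sym2.eq_iff] at h
      rcases h with ⟨-, h2⟩ | ⟨h1, -⟩
      · exact ((mv_inj.mp h2).2)
      · exact absurd h1 uu_ne_mv
    have hcover : (Set.univ : Set (Fin n)) ⊆
        Sg ∪ ({j | mv i j ∈ D.bag tc} ∪ ({j | mv i j ∈ D.bag ti} ∪
          {j | D.Crosses tc s(uu i, mv i j)})) := by
      intro j _
      by_cases h1 : mv i j ∈ D.bag tc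
      · exact Or.inr (Or.inl h1)
      by_cases h2 : mv i j ∈ D.bag ti
      · exact Or.inr (Or.inr (Or.inl h2))
      by_cases h3 : D.Crosses tc s(uu i, mv i j)
      · exact Or.inr (Or.inr (Or.inr h3))
      · exact Or.inl ⟨h1, h2, h3⟩
    have hcard : n ≤ Sg.ncard + (m + (m + m)) := by
      have h0 : (Set.univ : Set (Fin n)).ncard = n := by
        rw [Set.ncard_univ, Nat.card_eq_fintype_card, Fintype.card_fin]
      calc n = (Set.univ : Set (Fin n)).ncard := h0.symm
        _ ≤ (Sg ∪ _).ncard := Set.ncard_le_ncard hcover (Set.toFinite _)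
        _ ≤ Sg.ncard + (({j | mv i j ∈ D.bag tc} : Set (Fin n)) ∪ _).ncard :=
            Set.ncard_union_le _ _
        _ ≤ Sg.ncard + (({j | mv i j ∈ D.bag tc} : Set (Fin n)).ncard +
            (({j | mv i j ∈ D.bag ti} : Set (Fin n)) ∪ _).ncard) :=
            add_le_add le_rfl (Set.ncard_union_le _ _)
        _ ≤ Sg.ncard + (({j | mv i j ∈ D.bag tc} : Set (Fin n)).ncard +
            (({j | mv i j ∈ D.bag ti} : Set (Fin n)).ncard +
             ({j | D.Crosses tc s(uu i, mv i j)} : Set (Fin n)).ncard)) :=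
            add_le_add le_rfl (add_le_add le_rfl (Set.ncard_union_le _ _))
        _ ≤ Sg.ncard + (m + (m + m)) :=
            add_le_add le_rfl (add_le_add (hbag tc)
              (add_le_add (hbag ti) hcrossbag))
    -- every good j yields an edge crossing ti
    have hmain : Sg.ncard ≤ m := by
      refine le_trans (Set.ncard_le_ncard_of_injOn (fun j => s(ctr n, mv i j))
        (fun j hj => ?_) (fun a _ b _ h => ?_) (Set.toFinite _)) (hcross ti)
      · simp only [Set.mem_setOf_eq]
        obtain ⟨h1, h2, h3⟩ := hj
        have hsc : nd (mv i j) ≠ tc := fun h => h1 (h ▸ hnd (mv i j))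
        have hsi : nd (mv i j) ≠ ti := fun h => h2 (h ▸ hnd (mv i j))
        have hreach : (D.T.induce {x | x ≠ tc}).Reachable ⟨ti, hne⟩ ⟨nd (mv i j), hsc⟩ := by
          by_contra hNR
          exact h3 ⟨(thickenedStar n).mem_edgeSet.mpr (adj_uu_mv i j),
            uu i, mv i j, ti, nd (mv i j), hne, hsc, rfl, hnd (uu i), hnd (mv i j), hNR⟩
        have hNR2 := factB D.isTree hadj hsc hsi hreach
        exact ⟨(thickenedStar n).mem_edgeSet.mpr (adj_ctr_mv i j),
          ctr n, mv i j, tc, nd (mv i j), hne.symm, hsi, rfl, hnd (ctr n), hnd (mv i j), hNR2⟩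
      · simp only [Sym2.eq_iff] at h
        rcases h with ⟨-, h2⟩ | ⟨h1, -⟩
        · exact (mv_inj.mp h2).2
        · exact absurd h1 ctr_ne_mv
    omega
  · -- non-adjacent case: take the second vertex on the path from tc to ti
    have hne' : ti ≠ tc := hne
    obtain ⟨w0⟩ := D.isTree.1.preconnected tc ti
    set pw : D.T.Walk tc ti := (w0.toPath : D.T.Walk tc ti) with hpw_def
    have hpw : pw.IsPath := w0.toPath.2
    have hlen : 0 < pw.length :=
      Nat.pos_of_ne_zero fun h => hne (SimpleGraph.Walk.eq_of_length_eq_zero h).symm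
    set t := pw.getVert 1 with ht_def
    have htadj : D.T.Adj tc t := by
      have := pw.adj_getVert_succ hlen
      rwa [SimpleGraph.Walk.getVert_zero] at this
    have htc : tc ≠ t := htadj.ne
    have hti : ti ≠ t := fun h => hadj (by rw [h]; exact htadj)
    have htmem : t ∈ pw.support :=
      SimpleGraph.Walk.mem_support_iff_exists_getVert.mpr ⟨1, rfl, hlen⟩
    have hNRci := factA D.isTree pw hpw htmem htc hti
    set Sg : Set (Fin n) := {j | mv i j ∉ D.bag t} with hSg
    have hcard : n ≤ Sg.ncard + m := by
      have h0 : (Set.univ : Set (Fin n)).ncard = n := by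
        rw [Set.ncard_univ, Nat.card_eq_fintype_card, Fintype.card_fin]
      have hcover : (Set.univ : Set (Fin n)) ⊆ Sg ∪ {j | mv i j ∈ D.bag t} := by
        intro j _
        by_cases h1 : mv i j ∈ D.bag t
        · exact Or.inr h1
        · exact Or.inl h1
      calc n = (Set.univ : Set (Fin n)).ncard := h0.symm
        _ ≤ (Sg ∪ {j | mv i j ∈ D.bag t}).ncard := Set.ncard_le_ncard hcover (Set.toFinite _)
        _ ≤ Sg.ncard + ({j | mv i j ∈ D.bag t} : Set (Fin n)).ncard := Set.ncard_union_le _ _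
        _ ≤ Sg.ncard + m := add_le_add le_rfl (hbag t)
    have hmain : Sg.ncard ≤ m := by
      refine le_trans (Set.ncard_le_ncard_of_injOn
        (fun j => if (∃ hs : nd (mv i j) ≠ t,
            (D.T.induce {x | x ≠ t}).Reachable ⟨nd (mv i j), hs⟩ ⟨tc, htc⟩)
          then s(uu i, mv i j) else s(ctr n, mv i j))
        (fun j hj => ?_) (fun a _ b _ h => ?_) (Set.toFinite _)) (hcross t)
      · simp only [Set.mem_setOf_eq]
        have hs : nd (mv i j) ≠ t := fun h => hj (h ▸ hnd (mv i j))
        by_cases hcnd : (∃ hs : nd (mv i j) ≠ t,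
            (D.T.induce {x | x ≠ t}).Reachable ⟨nd (mv i j), hs⟩ ⟨tc, htc⟩)
        · rw [if_pos hcnd]
          obtain ⟨hs', hr'⟩ := hcnd
          refine ⟨(thickenedStar n).mem_edgeSet.mpr (adj_uu_mv i j),
            uu i, mv i j, ti, nd (mv i j), hti, hs, rfl, hnd (uu i), hnd (mv i j), ?_⟩
          intro hre
          exact hNRci ((hre.trans hr').symm)
        · rw [if_neg hcnd]
          refine ⟨(thickenedStar n).mem_edgeSet.mpr (adj_ctr_mv i j),
            ctr n, mv i j, tc, nd (mv i j), htc, hs, rfl, hnd (ctr n), hnd (mv i j), ?_⟩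
          intro hre
          exact hcnd ⟨hs, hre.symm⟩
      · beta_reduce at h
        split_ifs at h
        · rw [Sym2.eq_iff] at h
          rcases h with ⟨-, h2⟩ | ⟨h1, -⟩
          · exact (mv_inj.mp h2).2
          · exact absurd h1 uu_ne_mv
        · rw [Sym2.eq_iff] at h
          rcases h with ⟨h1, -⟩ | ⟨h1, -⟩
          · exact absurd h1.symm ctr_ne_uu
          · exact absurd h1 uu_ne_mv
        · rw [Sym2.eq_iff] at h
          rcases h with ⟨h1, -⟩ | ⟨h1, -⟩
          · exact absurd h1 ctr_ne_uu
          · exact absurd h1 ctr_ne_mv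
        · rw [Sym2.eq_iff] at h
          rcases h with ⟨-, h2⟩ | ⟨h1, -⟩
          · exact (mv_inj.mp h2).2
          · exact absurd h1 ctr_ne_mv
    omega
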